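/- Let A, B be n×n complex matrices with AB positive semidefinite, and let Z be positive definite with largest eigenvalue a and smallest eigenvalue b. Then ‖ZAB‖ ≤ ((a+b)/(2√(ab))) · ‖BZA‖, where ‖·‖ is the operator norm. -/

import Mathlib

open scoped ComplexOrder ENNReal NNReal

section Aux

lemma stmt4_scalar {a b s t m : ℝ} (hb : 0 < b) (hba : b ≤ a)
    (h : t ^ 2 + a * b * s ^ 2 ≤ (a + b) * m) :
    s * t ≤ (a + b) / (2 * Real.sqrt (a * b)) * m := by
  have hab : (0:ℝ) < a * b := by nlinarith
  have hr : 0 < Real.sqrt (a * b) := Real.sqrt_pos.mpr hab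
  have hr2 : Real.sqrt (a * b) ^ 2 = a * b := Real.sq_sqrt hab.le
  rw [div_mul_eq_mul_div, le_div_iff₀ (by positivity)]
  nlinarith [sq_nonneg (Real.sqrt (a * b) * s - t)]

lemma stmt4_sprad_eq_nonzero {𝕜 : Type*} {A : Type*} [NormedField 𝕜] [Ring A] [Algebra 𝕜 A]
    (x : A) : spectralRadius 𝕜 x = ⨆ k ∈ spectrum 𝕜 x \ {0}, (‖k‖₊ : ℝ≥0∞) := by
  rw [spectralRadius]
  apply le_antisymm
  · refine iSup₂_le fun k hk => ?_
    by_cases h0 : k = 0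
    · simp [h0]
    · exact le_iSup₂_of_le k ⟨hk, h0⟩ le_rfl
  · exact iSup₂_le fun k hk => le_iSup₂_of_le k hk.1 le_rfl

lemma stmt4_sprad_swap {𝕜 : Type*} {A : Type*} [NormedField 𝕜] [Ring A] [Algebra 𝕜 A]
    (x y : A) : spectralRadius 𝕜 (x * y) = spectralRadius 𝕜 (y * x) := by
  rw [stmt4_sprad_eq_nonzero, stmt4_sprad_eq_nonzero, spectrum.nonzero_mul_comm]

lemma stmt4_quad_psd {n : ℕ} {Z : Matrix (Fin n) (Fin n) ℂ} (hZ : Z.PosDef) (a b : ℝ)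
    (ha : ∀ i, hZ.1.eigenvalues i ≤ a) (hb : ∀ i, b ≤ hZ.1.eigenvalues i) :
    (((a + b : ℝ) : ℂ) • Z - Z * Z - ((a * b : ℝ) : ℂ) • 1).PosSemidef := by
  have hH := hZ.1
  set U : Matrix (Fin n) (Fin n) ℂ := (hH.eigenvectorUnitary : Matrix (Fin n) (Fin n) ℂ) with hUdef
  have hU : U * star U = 1 := Matrix.mem_unitaryGroup_iff.mp hH.eigenvectorUnitary.2
  have hU' : star U * U = 1 := Matrix.mem_unitaryGroup_iff'.mp hH.eigenvectorUnitary.2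
  set D : Matrix (Fin n) (Fin n) ℂ :=
    Matrix.diagonal (RCLike.ofReal ∘ hH.eigenvalues) with hDdef
  have hspec : Z = U * D * star U := hH.spectral_theorem
  have key : ((a + b : ℝ) : ℂ) • Z - Z * Z - ((a * b : ℝ) : ℂ) • 1
      = U * (Matrix.diagonal (fun i => (RCLike.ofReal
          ((a + b) * hH.eigenvalues i - hH.eigenvalues i ^ 2 - a * b) : ℂ))) * star U := by
    have h1 : ((a + b : ℝ) : ℂ) • Z = U * (((a + b : ℝ) : ℂ) • D) * star U := by
      rw [hspec, Matrix.mul_smul, Matrix.smul_mul]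
    have h2 : Z * Z = U * (D * D) * star U := by
      rw [hspec]
      calc U * D * star U * (U * D * star U) = U * (D * (star U * U) * D) * star U := by
            simp only [Matrix.mul_assoc]
        _ = U * (D * D) * star U := by rw [hU']; simp only [Matrix.mul_one, Matrix.mul_assoc]
    have h3 : ((a * b : ℝ) : ℂ) • (1 : Matrix (Fin n) (Fin n) ℂ)
        = U * (((a * b : ℝ) : ℂ) • 1) * star U := by
      rw [Matrix.mul_smul, Matrix.smul_mul, Matrix.mul_one, hU]
    rw [h1, h2, h3, ← Matrix.sub_mul, ← Matrix.mul_sub, ← Matrix.sub_mul, ← Matrix.mul_sub]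
    congr 1
    congr 1
    rw [hDdef, Matrix.diagonal_mul_diagonal]
    have hco : (RCLike.ofReal : ℝ → ℂ) = Complex.ofReal := rfl
    ext i j
    rcases eq_or_ne i j with rfl | hij
    · simp only [Matrix.sub_apply, Matrix.smul_apply, Matrix.diagonal_apply_eq,
        Matrix.one_apply_eq, Function.comp_apply, smul_eq_mul, mul_one, hco]
      push_cast
      ring
    · simp [Matrix.sub_apply, Matrix.smul_apply, Matrix.diagonal_apply_ne _ hij,
        Matrix.one_apply_ne hij]
  rw [key]
  apply Matrix.PosSemidef.mul_mul_conjTranspose_same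
  refine Matrix.posSemidef_diagonal_iff.mpr fun i => ?_
  rw [RCLike.ofReal_alg, Complex.real_smul, mul_one, Complex.zero_le_real]
  nlinarith [ha i, hb i]

open scoped MatrixOrder in
lemma stmt4_sqrt {n : ℕ} {M : Matrix (Fin n) (Fin n) ℂ} (h : M.PosSemidef) :
    ∃ R : Matrix (Fin n) (Fin n) ℂ, R.PosSemidef ∧ R * R = M :=
  ⟨CFC.sqrt M, Matrix.LE.le.posSemidef (CFC.sqrt_nonneg M), CFC.sqrt_mul_sqrt_self M h.nonneg⟩

end Aux

set_option maxHeartbeats 1000000 in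
theorem stmt_4 (n : ℕ) (A B Z : Matrix (Fin n) (Fin n) ℂ)
    (hAB : (A * B).PosSemidef) (hZ : Z.PosDef) (a b : ℝ)
    (ha : ∀ i, hZ.1.eigenvalues i ≤ a) (ha' : ∃ i, hZ.1.eigenvalues i = a)
    (hb : ∀ i, b ≤ hZ.1.eigenvalues i) (hb' : ∃ i, hZ.1.eigenvalues i = b) :
    ‖Matrix.toEuclideanCLM (𝕜 := ℂ) (Z * A * B)‖ ≤
      (a + b) / (2 * Real.sqrt (a * b)) * ‖Matrix.toEuclideanCLM (𝕜 := ℂ) (B * Z * A)‖ := by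
  obtain ⟨i0, hi0⟩ := hb'
  have hb0 : 0 < b := by rw [← hi0]; exact hZ.eigenvalues_pos i0
  have hba : b ≤ a := by rw [← hi0]; exact ha i0
  set κ : ℝ := (a + b) / (2 * Real.sqrt (a * b)) with hκdef
  have hκ0 : 0 ≤ κ := by
    have h1 : (0:ℝ) < Real.sqrt (a * b) := Real.sqrt_pos.mpr (by nlinarith)
    exact div_nonneg (by nlinarith) (by nlinarith)
  set F := Matrix.toEuclideanCLM (𝕜 := ℂ) (n := Fin n) with hFdef
  obtain ⟨R, hRpsd, hRR⟩ := stmt4_sqrt hAB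
  have hRH : star R = R := hRpsd.1
  have hZH : star Z = Z := hZ.1
  have hFR : ContinuousLinearMap.adjoint (F R) = F R := by
    rw [← ContinuousLinearMap.star_eq_adjoint, ← map_star, hRH]
  have hFZ : ContinuousLinearMap.adjoint (F Z) = F Z := by
    rw [← ContinuousLinearMap.star_eq_adjoint, ← map_star, hZH]
  -- Lemma A : the sharp scalar bound for `Z`
  have lemA : ∀ v : EuclideanSpace ℂ (Fin n),
      ‖v‖ * ‖F Z v‖ ≤ κ * RCLike.re (inner (𝕜 := ℂ) v (F Z v)) := by
    intro v
    have hP := stmt4_quad_psd hZ a b ha hb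
    set P : Matrix (Fin n) (Fin n) ℂ :=
      ((a + b : ℝ) : ℂ) • Z - Z * Z - ((a * b : ℝ) : ℂ) • 1 with hPdef
    obtain ⟨C, hCpsd, hCC⟩ := stmt4_sqrt hP
    have hCH : star C = C := hCpsd.1
    have hFC : ContinuousLinearMap.adjoint (F C) = F C := by
      rw [← ContinuousLinearMap.star_eq_adjoint, ← map_star, hCH]
    have hkey : 0 ≤ RCLike.re (inner (𝕜 := ℂ) v (F P v)) := by
      have h1 : F P v = F C (F C v) := by
        rw [← hCC, map_mul, ContinuousLinearMap.mul_apply]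
      have h2 : inner (𝕜 := ℂ) v (F C (F C v)) = inner (𝕜 := ℂ) (F C v) (F C v) := by
        rw [← ContinuousLinearMap.adjoint_inner_left (F C) (F C v) v, hFC]
      rw [h1, h2]
      exact inner_self_nonneg
    have hzz : inner (𝕜 := ℂ) v (F Z (F Z v)) = inner (𝕜 := ℂ) (F Z v) (F Z v) := by
      rw [← ContinuousLinearMap.adjoint_inner_left (F Z) (F Z v) v, hFZ]
    have hexp : RCLike.re (inner (𝕜 := ℂ) v (F P v))
        = (a + b) * RCLike.re (inner (𝕜 := ℂ) v (F Z v)) - ‖F Z v‖ ^ 2 - a * b * ‖v‖ ^ 2 := by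
      have hv : F P v = ((a + b : ℝ) : ℂ) • (F Z v) - F Z (F Z v) - ((a * b : ℝ) : ℂ) • v := by
        rw [hPdef, map_sub, map_sub, map_smul, map_smul, map_one, map_mul]
        simp [ContinuousLinearMap.sub_apply, ContinuousLinearMap.smul_apply,
          ContinuousLinearMap.mul_apply, ContinuousLinearMap.one_apply]
      rw [hv, inner_sub_right, inner_sub_right, inner_smul_right, inner_smul_right, hzz]
      rw [inner_self_eq_norm_sq (𝕜 := ℂ) (F Z v) |>.symm, inner_self_eq_norm_sq (𝕜 := ℂ) v |>.symm]
      simp [Complex.sub_re, Complex.mul_re, Complex.ofReal_re, Complex.ofReal_im]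
    refine stmt4_scalar hb0 hba ?_
    nlinarith [hkey, hexp]
  -- norm of RZR versus norm of BZA via the spectral radius
  have hGH : star (R * Z * R) = R * Z * R := by
    rw [star_mul, star_mul, hRH, hZH, mul_assoc]
  have hsaFG : IsSelfAdjoint (F (R * Z * R)) := by
    rw [IsSelfAdjoint, ← map_star, hGH]
  haveI : Nontrivial (EuclideanSpace ℂ (Fin n)) := by
    refine ⟨⟨0, EuclideanSpace.single i0 1, fun h => ?_⟩⟩
    have := congrArg (fun f : EuclideanSpace ℂ (Fin n) => f i0) h
    simp [EuclideanSpace.single_apply] at this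
  have hsprF : ∀ M : Matrix (Fin n) (Fin n) ℂ,
      spectralRadius ℂ (F M) = spectralRadius ℂ M := by
    intro M
    rw [spectralRadius, spectralRadius, AlgEquiv.spectrum_eq F M]
  have hsprad : spectralRadius ℂ (F (R * Z * R)) = spectralRadius ℂ (F (B * Z * A)) := by
    rw [hsprF, hsprF]
    calc spectralRadius ℂ (R * Z * R) = spectralRadius ℂ (R * (Z * R)) := by rw [mul_assoc]
      _ = spectralRadius ℂ ((Z * R) * R) := stmt4_sprad_swap _ _
      _ = spectralRadius ℂ ((Z * A) * B) := by rw [mul_assoc, hRR, ← mul_assoc]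
      _ = spectralRadius ℂ (B * (Z * A)) := stmt4_sprad_swap _ _
      _ = spectralRadius ℂ (B * Z * A) := by rw [mul_assoc]
  have h5 : ‖F (R * Z * R)‖ ≤ ‖F (B * Z * A)‖ := by
    have h51 : (‖F (R * Z * R)‖₊ : ℝ≥0∞) = spectralRadius ℂ (F (R * Z * R)) :=
      hsaFG.spectralRadius_eq_nnnorm.symm
    have h52 : spectralRadius ℂ (F (B * Z * A)) ≤ (‖F (B * Z * A)‖₊ : ℝ≥0∞) :=
      spectrum.spectralRadius_le_nnnorm _
    have h53 : (‖F (R * Z * R)‖₊ : ℝ≥0∞) ≤ (‖F (B * Z * A)‖₊ : ℝ≥0∞) := by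
      rw [h51, hsprad]; exact h52
    exact_mod_cast h53
  -- the per-vector bound
  have bound : ∀ u : EuclideanSpace ℂ (Fin n),
      ‖F (Z * A * B) u‖ ≤ κ * ‖F (R * Z * R)‖ * ‖u‖ := by
    intro u
    have hZAB : F (Z * A * B) u = F Z (F (A * B) u) := by
      rw [mul_assoc, map_mul, ContinuousLinearMap.mul_apply]
    by_cases hv0 : F (A * B) u = 0
    · rw [hZAB, hv0, map_zero, norm_zero]
      exact mul_nonneg (mul_nonneg hκ0 (norm_nonneg _)) (norm_nonneg _)
    · have hv : F (A * B) u = F R (F R u) := by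
        rw [← hRR, map_mul, ContinuousLinearMap.mul_apply]
      have hTw : F (R * Z * R) (F R u) = F R (F Z (F R (F R u))) := by
        rw [mul_assoc, map_mul, map_mul, ContinuousLinearMap.mul_apply,
          ContinuousLinearMap.mul_apply]
      have h3 := lemA (F (A * B) u)
      have e1 : inner (𝕜 := ℂ) (F (A * B) u) (F Z (F (A * B) u))
          = inner (𝕜 := ℂ) (F R u) (F (R * Z * R) (F R u)) := by
        calc inner (𝕜 := ℂ) (F (A * B) u) (F Z (F (A * B) u))
            = inner (𝕜 := ℂ) (ContinuousLinearMap.adjoint (F R) (F R u))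
              (F Z (F R (F R u))) := by rw [hFR, ← hv]
          _ = inner (𝕜 := ℂ) (F R u) (F R (F Z (F R (F R u)))) :=
              ContinuousLinearMap.adjoint_inner_left _ _ _
          _ = inner (𝕜 := ℂ) (F R u) (F (R * Z * R) (F R u)) := by rw [hTw]
      have hw2 : ‖F R u‖ ^ 2 ≤ ‖u‖ * ‖F (A * B) u‖ := by
        have e2 : inner (𝕜 := ℂ) (F R u) (F R u) = inner (𝕜 := ℂ) u (F (A * B) u) := by
          calc inner (𝕜 := ℂ) (F R u) (F R u)
              = inner (𝕜 := ℂ) (ContinuousLinearMap.adjoint (F R) u) (F R u) := by rw [hFR]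
            _ = inner (𝕜 := ℂ) u (F R (F R u)) := ContinuousLinearMap.adjoint_inner_left _ _ _
            _ = inner (𝕜 := ℂ) u (F (A * B) u) := by rw [← hv]
        have h := re_inner_le_norm (𝕜 := ℂ) u (F (A * B) u)
        rw [← inner_self_eq_norm_sq (𝕜 := ℂ) (F R u), e2]
        exact h
      have h4 : RCLike.re (inner (𝕜 := ℂ) (F (A * B) u) (F Z (F (A * B) u)))
          ≤ ‖F (R * Z * R)‖ * (‖u‖ * ‖F (A * B) u‖) := by
        rw [e1]
        have c1 := re_inner_le_norm (𝕜 := ℂ) (F R u) (F (R * Z * R) (F R u))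
        have c2 := (F (R * Z * R)).le_opNorm (F R u)
        nlinarith [norm_nonneg (F R u), norm_nonneg (F (R * Z * R) (F R u)),
          (F (R * Z * R)).opNorm_nonneg, hw2]
      have hvpos : 0 < ‖F (A * B) u‖ := norm_pos_iff.mpr hv0
      rw [hZAB]
      have h6 : ‖F (A * B) u‖ * ‖F Z (F (A * B) u)‖
          ≤ κ * (‖F (R * Z * R)‖ * (‖u‖ * ‖F (A * B) u‖)) :=
        le_trans h3 (mul_le_mul_of_nonneg_left h4 hκ0)
      nlinarith [norm_nonneg (F Z (F (A * B) u)), norm_nonneg u,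
        (F (R * Z * R)).opNorm_nonneg]
  calc ‖F (Z * A * B)‖ ≤ κ * ‖F (R * Z * R)‖ :=
        ContinuousLinearMap.opNorm_le_bound _ (mul_nonneg hκ0 (norm_nonneg _)) bound
    _ ≤ κ * ‖F (B * Z * A)‖ := mul_le_mul_of_nonneg_left h5 hκ0
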